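/- Let n>0, p>1, and Ω₀⊂ℝ a bounded interval. Then there exists C>0 such that for every nonnegative u∈C⁰(closure of Ω₀) with u∈C¹({u>0}), one has ∫_{Ω₀} u^p dx ≤ C { (∫_{Ω₀} u dx)^{(n+3p)/(n+3)} (∫_{Ω₀} χ_{{u>0}} u^{n-4} u_x⁴ dx)^{(p-1)/(n+3)} + (∫_{Ω₀} u dx)^p }. -/

import Mathlib

open MeasureTheory Real Set Filter

lemma oscBound (n : ℝ) (u : ℝ → ℝ) (a b s t M δ d : ℝ)
    (hd : 0 ≤ d)
    (hD : (∫⁻ x in Set.Ioo a b, ENNReal.ofReal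
        (Set.indicator {y | 0 < u y} (fun y => u y ^ (n - 4) * (deriv u y) ^ 4) x)) ≤ ENNReal.ofReal d)
    (hdiff : ∀ x, 0 < u x → DifferentiableAt ℝ u x)
    (has : a ≤ s) (hst : s ≤ t) (htb : t ≤ b)
    (hδ : 0 < δ) (hδM : δ ≤ M)
    (hlow : ∀ x ∈ Set.Icc s t, δ ≤ u x) (hup : ∀ x ∈ Set.Icc s t, u x ≤ M) :
    |u t - u s| ≤ (d / min (δ ^ (n-4)) (M ^ (n-4))) ^ ((4:ℝ)⁻¹) * (t - s) ^ (3/4 : ℝ) := by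
  set m : ℝ := min (δ ^ (n-4)) (M ^ (n-4)) with hm
  have hM : 0 < M := lt_of_lt_of_le hδ hδM
  have hm0 : 0 < m := lt_min (Real.rpow_pos_of_pos hδ _) (Real.rpow_pos_of_pos hM _)
  -- pointwise bound m * u'⁴ ≤ indicator value on Ioo s t
  have hpt : ∀ x ∈ Set.Ioo s t, ENNReal.ofReal m * ENNReal.ofReal ((deriv u x) ^ 4) ≤
      ENNReal.ofReal (Set.indicator {y | 0 < u y} (fun y => u y ^ (n - 4) * (deriv u y) ^ 4) x) := by
    intro x hx
    have hxI : x ∈ Set.Icc s t := Set.Ioo_subset_Icc_self hx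
    have hux : 0 < u x := lt_of_lt_of_le hδ (hlow x hxI)
    rw [Set.indicator_of_mem (by exact hux : x ∈ {y | 0 < u y})]
    rw [← ENNReal.ofReal_mul hm0.le]
    apply ENNReal.ofReal_le_ofReal
    have h1 : m ≤ u x ^ (n - 4) := by
      rcases le_or_gt 0 (n - 4) with h | h
      · exact le_trans (min_le_left _ _) (Real.rpow_le_rpow hδ.le (hlow x hxI) h)
      · exact le_trans (min_le_right _ _) (rpow_le_rpow_of_nonpos hux (hup x hxI) h.le)
    have h2 : (0:ℝ) ≤ (deriv u x) ^ 4 := by positivity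
    nlinarith [mul_le_mul_of_nonneg_right h1 h2]
  -- E4 bound
  set E4 : ENNReal := ∫⁻ x in Set.Ioo s t, ENNReal.ofReal ((deriv u x) ^ 4) with hE4
  have hsub : Set.Ioo s t ⊆ Set.Ioo a b := Set.Ioo_subset_Ioo has htb
  have hE4le : E4 ≤ ENNReal.ofReal (d / m) := by
    have h1 : ENNReal.ofReal m * E4 ≤ ENNReal.ofReal d := by
      calc ENNReal.ofReal m * E4 ≤
          ∫⁻ x in Set.Ioo s t, ENNReal.ofReal m * ENNReal.ofReal ((deriv u x) ^ 4) :=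
            lintegral_const_mul_le _ _
        _ ≤ ∫⁻ x in Set.Ioo s t, ENNReal.ofReal
              (Set.indicator {y | 0 < u y} (fun y => u y ^ (n - 4) * (deriv u y) ^ 4) x) := by
            apply setLIntegral_mono' measurableSet_Ioo hpt
        _ ≤ _ := le_trans (lintegral_mono_set hsub) hD
    rw [ENNReal.ofReal_div_of_pos hm0]
    rw [ENNReal.le_div_iff_mul_le (Or.inl (by simp [hm0.ne', ENNReal.ofReal_eq_zero]; linarith))
      (Or.inl ENNReal.ofReal_ne_top)]
    rwa [mul_comm]
  -- Hölder
  set E1 : ENNReal := ∫⁻ x in Set.Ioo s t, ENNReal.ofReal |deriv u x| with hE1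
  have hmeas : Measurable fun x => ENNReal.ofReal |deriv u x| :=
    ((measurable_deriv u).abs).ennreal_ofReal
  have hholder : E1 ≤ E4 ^ ((4:ℝ)⁻¹) * (ENNReal.ofReal (t - s)) ^ (3/4 : ℝ) := by
    have hpq : Real.HolderConjugate 4 (4/3) := ⟨by norm_num, by norm_num, by norm_num⟩
    have key := ENNReal.lintegral_mul_le_Lp_mul_Lq (volume.restrict (Set.Ioo s t)) hpq
      (f := fun x => ENNReal.ofReal |deriv u x|) (g := fun _ => 1)
      hmeas.aemeasurable aemeasurable_const
    simp only [Pi.mul_apply, mul_one, one_mul, ENNReal.one_rpow, lintegral_const,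
      Measure.restrict_apply_univ, Real.volume_Ioo] at key
    have heq4 : (∫⁻ x in Set.Ioo s t, ENNReal.ofReal |deriv u x| ^ (4:ℝ)) = E4 := by
      apply lintegral_congr
      intro x
      rw [ENNReal.ofReal_rpow_of_nonneg (abs_nonneg _) (by norm_num)]
      congr 1
      rw [show ((4:ℝ)) = ((4:ℕ):ℝ) by norm_num, Real.rpow_natCast, ← abs_pow,
        abs_of_nonneg (by positivity : (0:ℝ) ≤ (deriv u x)^4)]
    rw [heq4, (by norm_num : (1/(4:ℝ)) = (4:ℝ)⁻¹), (by norm_num : (1/(4/3:ℝ)) = (3/4:ℝ))] at key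
    exact key
  have hE1lt : E1 < ⊤ := by
    apply lt_of_le_of_lt hholder
    exact ENNReal.mul_lt_top (ENNReal.rpow_lt_top_of_nonneg (by norm_num)
      (lt_of_le_of_lt hE4le ENNReal.ofReal_lt_top).ne)
      (ENNReal.rpow_lt_top_of_nonneg (by norm_num) ENNReal.ofReal_ne_top)
  -- integrability of deriv on [s,t]
  have hrestr : volume.restrict (Set.Ioc s t) = volume.restrict (Set.Ioo s t) :=
    (Measure.restrict_congr_set Ioo_ae_eq_Ioc).symm
  have hint : IntervalIntegrable (deriv u) volume s t := by
    rw [intervalIntegrable_iff_integrableOn_Ioc_of_le hst]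
    refine ⟨(measurable_deriv u).aestronglyMeasurable, ?_⟩
    unfold HasFiniteIntegral
    have : ∀ x, (‖deriv u x‖ₑ : ENNReal) = ENNReal.ofReal |deriv u x| := by
      intro x; rw [Real.enorm_eq_ofReal_abs]
    simp_rw [this, hrestr]
    exact hE1lt
  -- FTC
  have hderiv : ∀ x ∈ Set.uIcc s t, HasDerivAt u (deriv u x) x := by
    intro x hx
    rw [Set.uIcc_of_le hst] at hx
    exact (hdiff x (lt_of_lt_of_le hδ (hlow x hx))).hasDerivAt
  have hftc : ∫ y in s..t, deriv u y = u t - u s :=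
    intervalIntegral.integral_eq_sub_of_hasDerivAt hderiv hint
  -- conclude
  have habs : |u t - u s| ≤ ∫ y in s..t, |deriv u y| := by
    rw [← hftc]; exact intervalIntegral.abs_integral_le_integral_abs hst
  have heq : ENNReal.ofReal (∫ y in s..t, |deriv u y|) = E1 := by
    rw [intervalIntegral.integral_of_le hst]
    rw [MeasureTheory.integral_Ioc_eq_integral_Ioo]
    rw [ofReal_integral_eq_lintegral_ofReal]
    · refine ⟨(measurable_deriv u).abs.aestronglyMeasurable, ?_⟩
      unfold HasFiniteIntegral
      have : ∀ x, (‖|deriv u x|‖ₑ : ENNReal) = ENNReal.ofReal |deriv u x| := by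
        intro x; rw [Real.enorm_eq_ofReal_abs, abs_abs]
      simp_rw [this]
      exact hE1lt
    · exact Filter.Eventually.of_forall (fun x => abs_nonneg _)
  have hfin : E1 ≤ ENNReal.ofReal ((d / m) ^ ((4:ℝ)⁻¹) * (t - s) ^ (3/4 : ℝ)) := by
    calc E1 ≤ E4 ^ ((4:ℝ)⁻¹) * (ENNReal.ofReal (t - s)) ^ (3/4 : ℝ) := hholder
      _ ≤ (ENNReal.ofReal (d/m)) ^ ((4:ℝ)⁻¹) * (ENNReal.ofReal (t - s)) ^ (3/4 : ℝ) := by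
          gcongr
      _ = ENNReal.ofReal ((d / m) ^ ((4:ℝ)⁻¹) * (t - s) ^ (3/4 : ℝ)) := by
          rw [ENNReal.ofReal_rpow_of_nonneg (div_nonneg hd hm0.le) (by norm_num),
            ENNReal.ofReal_rpow_of_nonneg (by linarith) (by norm_num),
            ← ENNReal.ofReal_mul (Real.rpow_nonneg (div_nonneg hd hm0.le) _)]
  have := le_trans habs (by
    have h2 : ENNReal.ofReal (∫ y in s..t, |deriv u y|) ≤
        ENNReal.ofReal ((d / m) ^ ((4:ℝ)⁻¹) * (t - s) ^ (3/4 : ℝ)) := heq ▸ hfin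
    have h3 := (ENNReal.ofReal_le_ofReal_iff (mul_nonneg (Real.rpow_nonneg (div_nonneg hd hm0.le) _) (Real.rpow_nonneg (by linarith) _))).mp h2
    exact h3)
  exact this

lemma propagate (f : ℝ → ℝ) (x₀ b M K r : ℝ) (hM : 0 < M)
    (hK : 0 ≤ K) (hKr : K * r ^ (3/4:ℝ) ≤ M/2)
    (hf : ContinuousOn f (Set.Icc x₀ b)) (hfx₀ : f x₀ = M)
    (hest : ∀ x ∈ Set.Icc x₀ b, (∀ s ∈ Set.Icc x₀ x, M/2 ≤ f s) →
      M - K * (x - x₀) ^ (3/4:ℝ) ≤ f x) :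
    ∀ x ∈ Set.Icc x₀ b, x - x₀ < r → M/2 ≤ f x := by
  by_contra hcon
  push_neg at hcon
  obtain ⟨x₁, hx₁, hx₁r, hx₁f⟩ := hcon
  set S : Set ℝ := Set.Icc x₀ x₁ ∩ f ⁻¹' (Set.Iic (M/2)) with hS
  have hsubI : Set.Icc x₀ x₁ ⊆ Set.Icc x₀ b := Set.Icc_subset_Icc_right hx₁.2
  have hScl : IsClosed S :=
    (hf.mono hsubI).preimage_isClosed_of_isClosed isClosed_Icc isClosed_Iic
  have hSne : S.Nonempty := ⟨x₁, ⟨hx₁.1, le_rfl⟩, hx₁f.le⟩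
  have hSbdd : BddBelow S := ⟨x₀, fun y hy => hy.1.1⟩
  set c := sInf S with hc
  have hcS : c ∈ S := hScl.csInf_mem hSne hSbdd
  have hcx₀ : x₀ < c := by
    rcases lt_or_eq_of_le hcS.1.1 with h | h
    · exact h
    · exfalso
      have : f x₀ ≤ M/2 := h ▸ hcS.2
      rw [hfx₀] at this; linarith
  have hclow : ∀ s ∈ Set.Ico x₀ c, M/2 ≤ f s := by
    intro s hs
    by_contra h
    push_neg at h
    have : s ∈ S := ⟨⟨hs.1, le_trans hs.2.le hcS.1.2⟩, h.le⟩
    exact absurd (csInf_le hSbdd this) (not_le.mpr hs.2)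
  -- f c ≥ M/2 by continuity from the left
  have hfc : M/2 ≤ f c := by
    have hne : (nhdsWithin c (Set.Ico x₀ c)).NeBot := by
      apply mem_closure_iff_nhdsWithin_neBot.mp
      rw [closure_Ico hcx₀.ne]
      exact ⟨hcS.1.1, le_rfl⟩
    have hcont : ContinuousWithinAt f (Set.Ico x₀ c) c := by
      apply (hf.continuousWithinAt (hsubI hcS.1)).mono
      intro y hy
      exact hsubI ⟨hy.1, le_trans hy.2.le hcS.1.2⟩
    exact ge_of_tendsto hcont (eventually_nhdsWithin_of_forall hclow)
  have hall : ∀ s ∈ Set.Icc x₀ c, M/2 ≤ f s := by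
    intro s hs
    rcases lt_or_eq_of_le hs.2 with h | h
    · exact hclow s ⟨hs.1, h⟩
    · exact h ▸ hfc
  have hest' := hest c (hsubI hcS.1) hall
  have hlt : K * (c - x₀) ^ (3/4:ℝ) < M/2 := by
    rcases eq_or_lt_of_le hK with h | h
    · rw [← h]; simpa using half_pos hM
    · calc K * (c - x₀) ^ (3/4:ℝ) < K * r ^ (3/4:ℝ) := by
            apply mul_lt_mul_of_pos_left _ h
            apply Real.rpow_lt_rpow (by linarith [hcx₀]) _ (by norm_num)
            have : c ≤ x₁ := hcS.1.2
            linarith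
        _ ≤ M/2 := hKr
  have : M/2 < f c := by linarith
  have hle : f c ≤ M/2 := hcS.2
  linarith

-- small algebra lemmas
lemma add_rpow_le_two_rpow (x y q : ℝ) (hx : 0 ≤ x) (hy : 0 ≤ y) (hq : 0 ≤ q) :
    (x + y) ^ q ≤ 2 ^ q * (x ^ q + y ^ q) := by
  rcases le_total x y with h | h
  · calc (x + y) ^ q ≤ (2 * y) ^ q := Real.rpow_le_rpow (by linarith) (by linarith) hq
      _ = 2 ^ q * y ^ q := Real.mul_rpow (by norm_num) hy
      _ ≤ 2 ^ q * (x ^ q + y ^ q) := by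
          have h1 : (0:ℝ) ≤ x ^ q := Real.rpow_nonneg hx _
          have h2 : (0:ℝ) ≤ (2:ℝ) ^ q := Real.rpow_nonneg (by norm_num) _
          nlinarith
  · calc (x + y) ^ q ≤ (2 * x) ^ q := Real.rpow_le_rpow (by linarith) (by linarith) hq
      _ = 2 ^ q * x ^ q := Real.mul_rpow (by norm_num) hx
      _ ≤ 2 ^ q * (x ^ q + y ^ q) := by
          have h1 : (0:ℝ) ≤ y ^ q := Real.rpow_nonneg hy _
          have h2 : (0:ℝ) ≤ (2:ℝ) ^ q := Real.rpow_nonneg (by norm_num) _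
          nlinarith

lemma rpow_le_const_mul_self (y M p : ℝ) (hy : 0 ≤ y) (hyM : y ≤ M) (hp : 1 ≤ p) :
    y ^ p ≤ M ^ (p - 1) * y := by
  rcases eq_or_lt_of_le hy with h | h
  · rw [← h, Real.zero_rpow (by linarith), mul_zero]
  · have heq : y ^ (p - 1) * y = y ^ p := by
      rw [Real.rpow_sub h, Real.rpow_one, div_mul_cancel₀ _ h.ne']
    rw [← heq]
    exact mul_le_mul_of_nonneg_right (Real.rpow_le_rpow hy hyM (by linarith)) hy

theorem stmt4 (n p a b : ℝ) (hn : 0 < n) (hp : 1 < p) (hab : a < b) :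
    ∃ C > 0, ∀ u : ℝ → ℝ,
      ContinuousOn u (Set.Icc a b) → (∀ x ∈ Set.Icc a b, 0 ≤ u x) →
      (∀ x, 0 < u x → DifferentiableAt ℝ u x) →
      (∫⁻ x in Set.Ioo a b, ENNReal.ofReal (u x ^ p)) ≤
        ENNReal.ofReal C *
          ((∫⁻ x in Set.Ioo a b, ENNReal.ofReal (u x)) ^ ((n + 3 * p) / (n + 3)) *
            (∫⁻ x in Set.Ioo a b, ENNReal.ofReal
              (Set.indicator {y | 0 < u y}
                (fun y => u y ^ (n - 4) * (deriv u y) ^ 4) x)) ^ ((p - 1) / (n + 3))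
          + (∫⁻ x in Set.Ioo a b, ENNReal.ofReal (u x)) ^ p) := by
  have hn3 : (0:ℝ) < n + 3 := by linarith
  set c₁ : ℝ := min ((2:ℝ) ^ (4 - n)) 1 with hc₁def
  have hc₁ : 0 < c₁ := lt_min (Real.rpow_pos_of_pos (by norm_num) _) one_pos
  set c₂ : ℝ := (2:ℝ) ^ ((7:ℝ)/3) / c₁ ^ ((1:ℝ)/3) with hc₂def
  have hc₂ : 0 < c₂ := div_pos (Real.rpow_pos_of_pos (by norm_num) _) (Real.rpow_pos_of_pos hc₁ _)
  set c₃ : ℝ := c₂ ^ ((3:ℝ)/(n+3)) with hc₃def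
  have hc₃ : 0 < c₃ := Real.rpow_pos_of_pos hc₂ _
  set c₄ : ℝ := 4 / (b - a) with hc₄def
  have hc₄ : 0 < c₄ := div_pos (by norm_num) (by linarith)
  set K₀ : ℝ := max c₃ c₄ with hK₀def
  have hK₀ : 0 < K₀ := lt_max_of_lt_left hc₃
  set C : ℝ := K₀ ^ (p-1) * 2 ^ (p-1) with hCdef
  have hC : 0 < C := mul_pos (Real.rpow_pos_of_pos hK₀ _) (Real.rpow_pos_of_pos two_pos _)
  clear_value c₁ c₂ c₃ c₄ K₀ C
  refine ⟨C, hC, ?_⟩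
  intro u hu hpos hdiff
  set I := ∫⁻ x in Set.Ioo a b, ENNReal.ofReal (u x) with hIdef
  set D := ∫⁻ x in Set.Ioo a b, ENNReal.ofReal
      (Set.indicator {y | 0 < u y} (fun y => u y ^ (n - 4) * (deriv u y) ^ 4) x) with hDdef
  have huae : AEMeasurable u (volume.restrict (Set.Ioo a b)) :=
    (hu.mono Set.Ioo_subset_Icc_self).aemeasurable measurableSet_Ioo
  clear_value I D
  by_cases hI0 : I = 0
  · -- left side vanishes
    have hu0 := (lintegral_eq_zero_iff' huae.ennreal_ofReal).mp (by rw [← hIdef]; exact hI0)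
    have hz : (∫⁻ x in Set.Ioo a b, ENNReal.ofReal (u x ^ p)) = 0 := by
      rw [← lintegral_zero (μ := volume.restrict (Set.Ioo a b))]
      apply lintegral_congr_ae
      filter_upwards [hu0, ae_restrict_mem measurableSet_Ioo] with x hx hmem
      have h1 : u x ≤ 0 := by
        simpa [ENNReal.ofReal_eq_zero] using hx
      have h2 : u x = 0 := le_antisymm h1 (hpos x (Set.Ioo_subset_Icc_self hmem))
      simp [h2, Real.zero_rpow (by linarith : p ≠ 0)]
    rw [hz]
    exact zero_le'
  have hβ : (0:ℝ) < (p - 1)/(n+3) := div_pos (by linarith) hn3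
  have hα : (0:ℝ) < (n + 3*p)/(n+3) := div_pos (by linarith) hn3
  by_cases hDtop : D = ⊤
  · -- RHS is infinite
    have hIα : I ^ ((n + 3*p)/(n+3)) ≠ 0 := by
      rw [Ne, ENNReal.rpow_eq_zero_iff]
      rintro (⟨h1, -⟩ | ⟨-, h2⟩)
      · exact hI0 h1
      · linarith
    have hRHS : ENNReal.ofReal C * (I ^ ((n + 3*p)/(n+3)) * D ^ ((p-1)/(n+3)) + I ^ p) = ⊤ := by
      rw [hDtop, ENNReal.top_rpow_of_pos hβ, ENNReal.mul_top hIα, top_add,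
        ENNReal.mul_top (by simp [ENNReal.ofReal_eq_zero]; linarith)]
    rw [hRHS]
    exact le_top
  -- max of u
  obtain ⟨x₀, hx₀mem, hx₀max⟩ := isCompact_Icc.exists_isMaxOn (Set.nonempty_Icc.mpr hab.le) hu
  set M := u x₀ with hMdef
  have hMle : ∀ x ∈ Set.Icc a b, u x ≤ M := fun x hx => hx₀max hx
  clear_value M
  have hM0 : 0 < M := by
    by_contra h
    push_neg at h
    apply hI0
    rw [hIdef, ← lintegral_zero (μ := volume.restrict (Set.Ioo a b))]
    apply lintegral_congr_ae
    filter_upwards [ae_restrict_mem measurableSet_Ioo] with x hmem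
    have := hMle x (Set.Ioo_subset_Icc_self hmem)
    have := hpos x (Set.Ioo_subset_Icc_self hmem)
    have : u x = 0 := by linarith
    simp [this]
  have hIfin : I ≠ ⊤ := by
    have : I ≤ ENNReal.ofReal M * volume (Set.Ioo a b) := by
      rw [hIdef, ← setLIntegral_const]
      exact setLIntegral_mono' measurableSet_Ioo
        (fun x hx => ENNReal.ofReal_le_ofReal (hMle x (Set.Ioo_subset_Icc_self hx)))
    exact ne_top_of_le_ne_top (by simp [Real.volume_Ioo, ENNReal.mul_eq_top]) this
  set d := D.toReal with hddef
  have hd0 : 0 ≤ d := ENNReal.toReal_nonneg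
  have hDeq : D = ENNReal.ofReal d := (ENNReal.ofReal_toReal hDtop).symm
  set Ir := I.toReal with hIrdef
  have hIr0 : 0 < Ir := ENNReal.toReal_pos hI0 hIfin
  have hIeq : I = ENNReal.ofReal Ir := (ENNReal.ofReal_toReal hIfin).symm
  clear_value d Ir
  -- the constants for this u
  set mm : ℝ := min ((M/2) ^ (n-4)) (M ^ (n-4)) with hmmdef
  have hmm0 : 0 < mm := lt_min (Real.rpow_pos_of_pos (by linarith) _) (Real.rpow_pos_of_pos hM0 _)
  set K : ℝ := (d / mm) ^ ((4:ℝ)⁻¹) with hKdef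
  have hKnn : 0 ≤ K := Real.rpow_nonneg (div_nonneg hd0 hmm0.le) _
  set r : ℝ := if K = 0 then b - a else ((M/2)/K) ^ ((4:ℝ)/3) with hrdef
  have hr0 : 0 < r := by
    rw [hrdef]
    split_ifs with h
    · linarith
    · exact Real.rpow_pos_of_pos (div_pos (by linarith) (lt_of_le_of_ne hKnn (Ne.symm h))) _
  have hKr : K * r ^ ((3:ℝ)/4) ≤ M/2 := by
    rw [hrdef]
    split_ifs with h
    · rw [h]; simp; linarith
    · have hK0 : 0 < K := lt_of_le_of_ne hKnn (Ne.symm h)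
      rw [← Real.rpow_mul (div_nonneg (by linarith : (0:ℝ) ≤ M/2) hKnn),
        show (4:ℝ)/3 * (3/4) = 1 by norm_num, Real.rpow_one, mul_comm,
        div_mul_cancel₀ _ hK0.ne']
  clear_value mm K r
  -- oscillation estimate
  have hosc : ∀ s t : ℝ, a ≤ s → s ≤ t → t ≤ b → (∀ x ∈ Set.Icc s t, M/2 ≤ u x) →
      |u t - u s| ≤ K * (t - s) ^ ((3:ℝ)/4) := by
    intro s t has hst htb hlow
    rw [hKdef, hmmdef]
    have := oscBound n u a b s t M (M/2) d hd0 (by rw [← hDdef]; exact hDeq.le) hdiff has hst htb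
      (by linarith) (by linarith) hlow
      (fun x hx => hMle x ⟨le_trans has hx.1, le_trans hx.2 htb⟩)
    exact this
  -- find an interval J on which u ≥ M/2
  have hJ : ∃ J : Set ℝ, MeasurableSet J ∧ J ⊆ Set.Ioo a b ∧
      volume J = ENNReal.ofReal (min r ((b-a)/2)) ∧ ∀ y ∈ J, M/2 ≤ u y := by
    rcases le_or_gt x₀ ((a+b)/2) with hx | hx
    · -- right side
      have hest : ∀ x ∈ Set.Icc x₀ b, (∀ s ∈ Set.Icc x₀ x, M/2 ≤ u s) →
          M - K * (x - x₀) ^ (3/4:ℝ) ≤ u x := by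
        intro x hxm hlow
        have h := hosc x₀ x hx₀mem.1 hxm.1 hxm.2 hlow
        have h1 := (abs_le.mp h).1
        linarith
      have hprop := propagate u x₀ b M K r hM0 hKnn hKr
        (hu.mono (Set.Icc_subset_Icc_left hx₀mem.1)) hMdef.symm hest
      refine ⟨Set.Ioo x₀ (x₀ + min r ((b-a)/2)), measurableSet_Ioo, ?_, ?_, ?_⟩
      · intro y hy
        refine ⟨lt_of_le_of_lt hx₀mem.1 hy.1, ?_⟩
        have h1 := min_le_right r ((b-a)/2)
        have h2 := hy.2
        linarith
      · rw [Real.volume_Ioo]; congr 1; ring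
      · intro y hy
        have h1 := min_le_right r ((b-a)/2)
        have h2 := min_le_left r ((b-a)/2)
        exact hprop y ⟨hy.1.le, by linarith [hy.2]⟩ (by linarith [hy.2])
    · -- left side (mirror)
      have hest : ∀ x ∈ Set.Icc (-x₀) (-a), (∀ s ∈ Set.Icc (-x₀) x, M/2 ≤ (fun z => u (-z)) s) →
          M - K * (x - -x₀) ^ (3/4:ℝ) ≤ (fun z => u (-z)) x := by
        intro x hxm hlow
        have hlow' : ∀ y ∈ Set.Icc (-x) x₀, M/2 ≤ u y := by
          intro y hy
          have hmem : -y ∈ Set.Icc (-x₀) x := ⟨by linarith [hy.2], by linarith [hy.1]⟩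
          have := hlow (-y) hmem
          simpa using this
        have h := hosc (-x) x₀ (by linarith [hxm.2]) (by linarith [hxm.1]) hx₀mem.2 hlow'
        have h2 : x₀ - -x = x - -x₀ := by ring
        rw [h2] at h
        have h3 := (abs_le.mp h).2
        simp only []
        linarith [hMdef]
      have hcont : ContinuousOn (fun z => u (-z)) (Set.Icc (-x₀) (-a)) := by
        apply hu.comp continuous_neg.continuousOn
        intro z hz
        have h1 : -z ∈ Set.Icc a b := ⟨by linarith [hz.2], by linarith [hz.1, hx₀mem.2]⟩
        exact h1
      have hprop := propagate (fun z => u (-z)) (-x₀) (-a) M K r hM0 hKnn hKr hcont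
        (by simp only [neg_neg]; exact hMdef.symm) hest
      refine ⟨Set.Ioo (x₀ - min r ((b-a)/2)) x₀, measurableSet_Ioo, ?_, ?_, ?_⟩
      · intro y hy
        have h1 := min_le_right r ((b-a)/2)
        exact ⟨by linarith [hy.1], lt_of_lt_of_le hy.2 hx₀mem.2⟩
      · rw [Real.volume_Ioo]; congr 1; ring
      · intro y hy
        have h1 := min_le_right r ((b-a)/2)
        have h2 := min_le_left r ((b-a)/2)
        have := hprop (-y) ⟨by linarith [hy.2], by linarith [hy.1]⟩ (by linarith [hy.1])
        simpa using this
  obtain ⟨J, hJmeas, hJsub, hJvol, hJlow⟩ := hJ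
  set ℓ : ℝ := min r ((b-a)/2) with hldef
  have hl0 : 0 < ℓ := lt_min hr0 (by linarith)
  clear_value ℓ
  have hIlow : ENNReal.ofReal (M/2 * ℓ) ≤ I := by
    calc ENNReal.ofReal (M/2 * ℓ) = ENNReal.ofReal (M/2) * ENNReal.ofReal ℓ :=
          ENNReal.ofReal_mul (by linarith)
      _ = ENNReal.ofReal (M/2) * volume J := by rw [hJvol]
      _ = ∫⁻ _ in J, ENNReal.ofReal (M/2) := (setLIntegral_const _ _).symm
      _ ≤ ∫⁻ x in J, ENNReal.ofReal (u x) :=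
          setLIntegral_mono' hJmeas (fun x hx => ENNReal.ofReal_le_ofReal (hJlow x hx))
      _ ≤ I := by rw [hIdef]; exact lintegral_mono_set hJsub
  have hIrlow : M/2 * ℓ ≤ Ir := by
    have h := ENNReal.toReal_mono hIfin hIlow
    rw [ENNReal.toReal_ofReal (mul_nonneg (by linarith) hl0.le)] at h
    rwa [← hIrdef] at h
  -- the key pointwise bound on M
  set X : ℝ := Ir ^ ((3:ℝ)/(n+3)) * d ^ ((1:ℝ)/(n+3)) with hXdef
  have hX0 : 0 ≤ X := mul_nonneg (Real.rpow_nonneg hIr0.le _) (Real.rpow_nonneg hd0 _)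
  clear_value X
  have hMbound : M ≤ K₀ * (X + Ir) := by
    rcases le_or_gt r ((b-a)/2) with hcase | hcase
    · -- r small
      have hlr : ℓ = r := by rw [hldef]; exact min_eq_left hcase
      have hKne : K ≠ 0 := by
        intro h
        rw [hrdef, if_pos h] at hcase
        linarith
      have hK0 : 0 < K := hKnn.lt_of_ne (Ne.symm hKne)
      have hdpos : 0 < d := by
        rcases eq_or_lt_of_le hd0 with h | h
        · exfalso
          apply hKne
          rw [hKdef, ← h, zero_div, Real.zero_rpow (by norm_num)]
        · exact h
      have hrval : r = ((M/2)/K) ^ ((4:ℝ)/3) := by rw [hrdef, if_neg hKne]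
      have hA : (0:ℝ) < M/2 := by linarith
      have h1 : M/2 * ((M/2)/K)^((4:ℝ)/3) ≤ Ir := by
        rw [← hrval]
        rw [hlr] at hIrlow
        exact hIrlow
      have h2 : ((M/2)/K)^((4:ℝ)/3) = (M/2)^((4:ℝ)/3) / K^((4:ℝ)/3) :=
        Real.div_rpow hA.le hKnn _
      have h3 : K ^ ((4:ℝ)/3) = (d/mm) ^ ((1:ℝ)/3) := by
        rw [hKdef, ← Real.rpow_mul (div_nonneg hd0 hmm0.le)]
        norm_num
      have hKp : 0 < K^((4:ℝ)/3) := Real.rpow_pos_of_pos hK0 _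
      have h5 : (M/2)^((7:ℝ)/3) ≤ Ir * K^((4:ℝ)/3) := by
        have e1 : (M/2)^((7:ℝ)/3) = (M/2) * (M/2)^((4:ℝ)/3) := by
          rw [show (7:ℝ)/3 = 1 + 4/3 by norm_num, Real.rpow_add hA, Real.rpow_one]
        rw [e1]
        rw [h2, ← mul_div_assoc] at h1
        rw [div_le_iff₀ hKp] at h1
        linarith
      have h6 : K^((4:ℝ)/3) = d^((1:ℝ)/3) / mm^((1:ℝ)/3) := by
        rw [h3, Real.div_rpow hd0 hmm0.le]
      have hmp : 0 < mm^((1:ℝ)/3) := Real.rpow_pos_of_pos hmm0 _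
      have h7 : (M/2)^((7:ℝ)/3) * mm^((1:ℝ)/3) ≤ Ir * d^((1:ℝ)/3) := by
        rw [h6, ← mul_div_assoc] at h5
        exact (le_div_iff₀ hmp).mp h5
      have hmmval : mm = M ^ (n-4) * c₁ := by
        rw [hmmdef, hc₁def, Real.div_rpow hM0.le (by norm_num : (0:ℝ) ≤ 2),
          div_eq_mul_inv, ← Real.rpow_neg (by norm_num : (0:ℝ) ≤ 2),
          show -(n-4) = 4 - n by ring,
          mul_min_of_nonneg _ _ (Real.rpow_nonneg hM0.le _), mul_one]
      have h8 : mm^((1:ℝ)/3) = M^((n-4)/3) * c₁^((1:ℝ)/3) := by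
        rw [hmmval, Real.mul_rpow (Real.rpow_nonneg hM0.le _) hc₁.le,
          ← Real.rpow_mul hM0.le, show (n-4) * ((1:ℝ)/3) = (n-4)/3 by ring]
      have h9 : (M/2)^((7:ℝ)/3) = M^((7:ℝ)/3) / 2^((7:ℝ)/3) :=
        Real.div_rpow hM0.le (by norm_num) _
      have h10 : M^((7:ℝ)/3) * M^((n-4)/3) = M^((n+3)/3) := by
        rw [← Real.rpow_add hM0]; congr 1; ring
      have e2 : (0:ℝ) < (2:ℝ)^((7:ℝ)/3) := Real.rpow_pos_of_pos (by norm_num) _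
      have e3 : (0:ℝ) < c₁^((1:ℝ)/3) := Real.rpow_pos_of_pos hc₁ _
      have h7' : M^((n+3)/3) * c₁^((1:ℝ)/3) / 2^((7:ℝ)/3) ≤ Ir * d^((1:ℝ)/3) := by
        have heq : M^((n+3)/3) * c₁^((1:ℝ)/3) / 2^((7:ℝ)/3) =
            (M/2)^((7:ℝ)/3) * mm^((1:ℝ)/3) := by
          rw [h8, h9, ← h10]; ring
        rw [heq]; exact h7
      have h11 : M^((n+3)/3) ≤ c₂ * (Ir * d^((1:ℝ)/3)) := by
        rw [div_le_iff₀ e2] at h7'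
        have h12 := (le_div_iff₀ e3).mpr h7'
        calc M^((n+3)/3) ≤ Ir * d^((1:ℝ)/3) * 2^((7:ℝ)/3) / c₁^((1:ℝ)/3) := h12
          _ = c₂ * (Ir * d^((1:ℝ)/3)) := by rw [hc₂def]; ring
      have h13 : M ≤ c₃ * X := by
        have hMeq : M = (M^((n+3)/3))^((3:ℝ)/(n+3)) := by
          rw [← Real.rpow_mul hM0.le, show (n+3)/3 * ((3:ℝ)/(n+3)) = 1 by
            field_simp, Real.rpow_one]
        rw [hMeq]
        calc (M^((n+3)/3))^((3:ℝ)/(n+3)) ≤ (c₂ * (Ir * d^((1:ℝ)/3)))^((3:ℝ)/(n+3)) :=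
              Real.rpow_le_rpow (Real.rpow_nonneg hM0.le _) h11 (le_of_lt (div_pos (by norm_num) hn3))
          _ = c₃ * X := by
              rw [Real.mul_rpow hc₂.le (mul_nonneg hIr0.le (Real.rpow_nonneg hd0 _)),
                Real.mul_rpow hIr0.le (Real.rpow_nonneg hd0 _),
                ← Real.rpow_mul hd0, show (1:ℝ)/3 * ((3:ℝ)/(n+3)) = 1/(n+3) by field_simp,
                hc₃def, hXdef]
      have hlast : c₃ * X ≤ K₀ * (X + Ir) :=
        le_trans (mul_le_mul_of_nonneg_right (by rw [hK₀def]; exact le_max_left c₃ c₄ : c₃ ≤ K₀) hX0)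
          (mul_le_mul_of_nonneg_left (le_add_of_nonneg_right hIr0.le) hK₀.le)
      exact le_trans h13 hlast
    · -- r big
      have hlr : ℓ = (b-a)/2 := by rw [hldef]; exact min_eq_right hcase.le
      rw [hlr] at hIrlow
      have h12 : M ≤ c₄ * Ir := by
        rw [hc₄def, div_mul_eq_mul_div, le_div_iff₀ (by linarith : (0:ℝ) < b-a)]
        linarith [hIrlow]
      have hlast : c₄ * Ir ≤ K₀ * (X + Ir) :=
        le_trans (mul_le_mul_of_nonneg_right (by rw [hK₀def]; exact le_max_right c₃ c₄ : c₄ ≤ K₀) hIr0.le)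
          (mul_le_mul_of_nonneg_left (le_add_of_nonneg_left hX0) hK₀.le)
      exact le_trans h12 hlast
  -- final assembly
  have hLHS : (∫⁻ x in Set.Ioo a b, ENNReal.ofReal (u x ^ p)) ≤ ENNReal.ofReal (M^(p-1)) * I := by
    rw [hIdef]
    have hstep : (∫⁻ x in Set.Ioo a b, ENNReal.ofReal (u x ^ p)) ≤
        ∫⁻ x in Set.Ioo a b, ENNReal.ofReal (M^(p-1)) * ENNReal.ofReal (u x) := by
      apply setLIntegral_mono' measurableSet_Ioo
      intro x hx
      rw [← ENNReal.ofReal_mul (Real.rpow_nonneg hM0.le _)]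
      exact ENNReal.ofReal_le_ofReal (rpow_le_const_mul_self (u x) M p
        (hpos x (Set.Ioo_subset_Icc_self hx)) (hMle x (Set.Ioo_subset_Icc_self hx)) hp.le)
    rwa [lintegral_const_mul'' _ huae.ennreal_ofReal] at hstep
  have hRHSeq : ENNReal.ofReal C * (I ^ ((n + 3*p)/(n+3)) * D ^ ((p-1)/(n+3)) + I ^ p) =
      ENNReal.ofReal (C * (Ir^((n+3*p)/(n+3)) * d^((p-1)/(n+3)) + Ir^p)) := by
    rw [hIeq, hDeq,
      ENNReal.ofReal_rpow_of_nonneg hIr0.le hα.le,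
      ENNReal.ofReal_rpow_of_nonneg hd0 hβ.le,
      ENNReal.ofReal_rpow_of_nonneg hIr0.le (by linarith : (0:ℝ) ≤ p),
      ← ENNReal.ofReal_mul (Real.rpow_nonneg hIr0.le _),
      ← ENNReal.ofReal_add (mul_nonneg (Real.rpow_nonneg hIr0.le _) (Real.rpow_nonneg hd0 _))
        (Real.rpow_nonneg hIr0.le _),
      ← ENNReal.ofReal_mul hC.le]
  have hfinal : M^(p-1) * Ir ≤ C * (Ir^((n+3*p)/(n+3)) * d^((p-1)/(n+3)) + Ir^p) := by
    have q0 : (0:ℝ) ≤ p - 1 := by linarith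
    have h1 : M^(p-1) ≤ (K₀ * (X + Ir))^(p-1) := Real.rpow_le_rpow hM0.le hMbound q0
    have h2 : (K₀ * (X + Ir))^(p-1) = K₀^(p-1) * (X + Ir)^(p-1) :=
      Real.mul_rpow hK₀.le (add_nonneg hX0 hIr0.le)
    have h3 : (X + Ir)^(p-1) ≤ 2^(p-1) * (X^(p-1) + Ir^(p-1)) :=
      add_rpow_le_two_rpow X Ir (p-1) hX0 hIr0.le q0
    have h4 : X^(p-1) = Ir^((3:ℝ)/(n+3)*(p-1)) * d^((1:ℝ)/(n+3)*(p-1)) := by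
      rw [hXdef, Real.mul_rpow (Real.rpow_nonneg hIr0.le _) (Real.rpow_nonneg hd0 _),
        ← Real.rpow_mul hIr0.le, ← Real.rpow_mul hd0]
    have h5 : Ir^((3:ℝ)/(n+3)*(p-1)) * Ir = Ir^((n+3*p)/(n+3)) := by
      have e := Real.rpow_add hIr0 ((3:ℝ)/(n+3)*(p-1)) 1
      rw [Real.rpow_one] at e
      rw [← e]; congr 1; field_simp; ring
    have h6 : Ir^(p-1) * Ir = Ir^p := by
      have e := Real.rpow_add hIr0 (p-1) 1
      rw [Real.rpow_one] at e
      rw [← e]; congr 1; ring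
    have h7 : (Ir^((3:ℝ)/(n+3)*(p-1)) * d^((1:ℝ)/(n+3)*(p-1))) * Ir =
        Ir^((n+3*p)/(n+3)) * d^((p-1)/(n+3)) := by
      rw [show (1:ℝ)/(n+3)*(p-1) = (p-1)/(n+3) by ring, ← h5]; ring
    calc M^(p-1) * Ir ≤ (K₀^(p-1) * (2^(p-1) * (X^(p-1) + Ir^(p-1)))) * Ir := by
          have hh2 : (K₀ * (X + Ir))^(p-1) ≤ K₀^(p-1) * (2^(p-1) * (X^(p-1) + Ir^(p-1))) := by
            rw [h2]
            exact mul_le_mul_of_nonneg_left h3 (Real.rpow_nonneg hK₀.le _)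
          exact mul_le_mul_of_nonneg_right (le_trans h1 hh2) hIr0.le
      _ = C * (X^(p-1) * Ir + Ir^(p-1) * Ir) := by rw [hCdef]; ring
      _ = C * (Ir^((n+3*p)/(n+3)) * d^((p-1)/(n+3)) + Ir^p) := by rw [h4, h6, h7]
  calc (∫⁻ x in Set.Ioo a b, ENNReal.ofReal (u x ^ p)) ≤ ENNReal.ofReal (M^(p-1)) * I := hLHS
    _ = ENNReal.ofReal (M^(p-1) * Ir) := by
        rw [hIeq, ← ENNReal.ofReal_mul (Real.rpow_nonneg hM0.le _)]
    _ ≤ ENNReal.ofReal (C * (Ir^((n+3*p)/(n+3)) * d^((p-1)/(n+3)) + Ir^p)) :=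
        ENNReal.ofReal_le_ofReal hfinal
    _ = ENNReal.ofReal C * (I ^ ((n + 3*p)/(n+3)) * D ^ ((p-1)/(n+3)) + I ^ p) := hRHSeq.symm
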